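/- Let E and F be pseudo-normed real vector spaces, let s_0 < s < s_1 be real numbers, q ∈ [1,∞], r > 0, and let Φ : B_{s,q}(0,r) → Σ^{s_0}_∞(F) satisfy the weak Lipschitz estimate. Then for every f ∈ B_{s,q}(0,r): S_n f ∈ B_{s,q}(0,r) for every n (so Φ(S_n f) is well-defined), and Φ(S_n f) converges to Φ(f) in Σ^{s_0}_∞(F), i.e. ‖Φ(f) − Φ(S_n f)‖_{Σ^{s_0}_∞(F)} → 0 as n → ∞. -/

import Mathlib

open Filter
open scoped ENNReal NNReal

/-- A pseudo-norm on a real vector space: nonnegative, symmetric, subadditive,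
and vanishing exactly at `0`. -/
structure IsPseudoNorm {E : Type*} [AddCommGroup E] [Module ℝ E] (N : E → ℝ) : Prop where
  nonneg : ∀ x, 0 ≤ N x
  neg : ∀ x, N (-x) = N x
  add_le : ∀ x y, N (x + y) ≤ N x + N y
  eq_zero_iff : ∀ x, N x = 0 ↔ x = 0

/-- The `Σ^s_q(E)` pseudo-norm of a sequence `f : ℕ → E`:
`(∑_k 2^{qks} ‖f_k‖_E^q)^{1/q}` for `q < ∞` and `sup_k 2^{ks} ‖f_k‖_E` for `q = ∞`. -/
noncomputable def sigmaNorm {E : Type*} (N : E → ℝ) (s : ℝ) (q : ℝ≥0∞) (f : ℕ → E) : ℝ≥0∞ :=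
  if q = ⊤ then ⨆ k : ℕ, ENNReal.ofReal ((2 : ℝ) ^ ((k : ℝ) * s) * N (f k))
  else (∑' k : ℕ, ENNReal.ofReal ((2 : ℝ) ^ ((k : ℝ) * s) * N (f k)) ^ q.toReal) ^ (1 / q.toReal)

/-- Membership in `Σ^s_q(E)`: finiteness of the norm when `q < ∞`, and
`2^{ks}‖f_k‖_E → 0` when `q = ∞`. -/
def memSigma {E : Type*} (N : E → ℝ) (s : ℝ) (q : ℝ≥0∞) (f : ℕ → E) : Prop :=
  if q = ⊤ then Tendsto (fun k : ℕ => (2 : ℝ) ^ ((k : ℝ) * s) * N (f k)) atTop (nhds 0)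
  else sigmaNorm N s q f < ⊤

/-- Friedrichs smoothing operator `S_n`: truncation of a sequence after index `n`. -/
def smoothS {E : Type*} [Zero E] (n : ℕ) (f : ℕ → E) : ℕ → E :=
  fun k => if k ≤ n then f k else 0

/-- Lemma 3.8: if `Φ : B_{s,q}(0,r) ⊆ Σ^s_q(E) → Σ^{s₀}_∞(F)` satisfies the weak
Lipschitz estimate, then for every `f ∈ B_{s,q}(0,r)` each `S_n f` also lies in
`B_{s,q}(0,r)` (so that `Φ(S_n f)` is well-defined) and `Φ(S_n f) → Φ(f)` in
`Σ^{s₀}_∞(F)`. -/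
theorem tendsto_Phi_smoothS_weakLipschitz
    {E F : Type*} [AddCommGroup E] [Module ℝ E] [AddCommGroup F] [Module ℝ F]
    (NE : E → ℝ) (NF : F → ℝ) (hNE : IsPseudoNorm NE) (hNF : IsPseudoNorm NF)
    (s₀ s s₁ : ℝ) (hs₀ : s₀ < s) (hs₁ : s < s₁)
    (q : ℝ≥0∞) (hq : 1 ≤ q) (r : ℝ) (hr : 0 < r)
    (Φ : (ℕ → E) → (ℕ → F))
    -- Φ maps the ball B_{s,q}(0,r) into Σ^{s₀}_∞(F)
    (hΦmem : ∀ v, memSigma NE s q v → sigmaNorm NE s q v < ENNReal.ofReal r →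
      memSigma NF s₀ ⊤ (Φ v))
    -- weak Lipschitz estimate
    (C₀ : ℝ) (hC₀ : 0 < C₀)
    (hlip : ∀ v w, memSigma NE s q v → sigmaNorm NE s q v < ENNReal.ofReal r →
      memSigma NE s q w → sigmaNorm NE s q w < ENNReal.ofReal r →
      sigmaNorm NF s₀ ⊤ (Φ v - Φ w) ≤ ENNReal.ofReal C₀ * sigmaNorm NE s₀ 1 (v - w))
    (f : ℕ → E) (hfmem : memSigma NE s q f) (hfball : sigmaNorm NE s q f < ENNReal.ofReal r) :
    (∀ n : ℕ, memSigma NE s q (smoothS n f) ∧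
      sigmaNorm NE s q (smoothS n f) < ENNReal.ofReal r) ∧
    Tendsto (fun n : ℕ => sigmaNorm NF s₀ ⊤ (Φ f - Φ (smoothS n f))) atTop (nhds 0) := by
  have hN0 : NE 0 = 0 := (hNE.eq_zero_iff 0).mpr rfl
  -- pointwise terms of smoothS are ≤ those of f
  have hterm : ∀ n : ℕ, ∀ k : ℕ, ENNReal.ofReal ((2 : ℝ) ^ ((k : ℝ) * s) * NE (smoothS n f k)) ≤
      ENNReal.ofReal ((2 : ℝ) ^ ((k : ℝ) * s) * NE (f k)) := by
    intro n k
    by_cases h : k ≤ n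
    · simp [smoothS, h]
    · simp [smoothS, h, hN0]
  -- Part 1 : each smoothS n f is in the ball
  have hnorm_le : ∀ n, sigmaNorm NE s q (smoothS n f) ≤ sigmaNorm NE s q f := by
    intro n
    unfold sigmaNorm
    by_cases hqt : q = ⊤
    · simp only [hqt, if_true]
      exact iSup_mono fun k => hterm n k
    · simp only [hqt, if_false]
      refine ENNReal.rpow_le_rpow ?_ (by positivity)
      exact ENNReal.tsum_le_tsum fun k =>
        ENNReal.rpow_le_rpow (hterm n k) ENNReal.toReal_nonneg
  have hball : ∀ n, sigmaNorm NE s q (smoothS n f) < ENNReal.ofReal r :=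
    fun n => lt_of_le_of_lt (hnorm_le n) hfball
  have hmem : ∀ n, memSigma NE s q (smoothS n f) := by
    intro n
    unfold memSigma
    by_cases hqt : q = ⊤
    · simp only [hqt, if_true]
      apply Tendsto.congr' _ tendsto_const_nhds
      filter_upwards [eventually_gt_atTop n] with k hk
      simp [smoothS, Nat.not_le.mpr hk, hN0]
    · simp only [hqt, if_false]
      exact lt_of_lt_of_le (hball n) le_top
  refine ⟨fun n => ⟨hmem n, hball n⟩, ?_⟩
  -- the sequence a₀ for the s₀, q = 1 norm
  set a₀ : ℕ → ℝ≥0∞ := fun k => ENNReal.ofReal ((2 : ℝ) ^ ((k : ℝ) * s₀) * NE (f k)) with ha₀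
  -- uniform bound on the s-terms
  obtain ⟨M, hMtop, hM⟩ : ∃ M : ℝ≥0∞, M ≠ ⊤ ∧
      ∀ k : ℕ, ENNReal.ofReal ((2 : ℝ) ^ ((k : ℝ) * s) * NE (f k)) ≤ M := by
    by_cases hqt : q = ⊤
    · unfold memSigma at hfmem
      rw [if_pos hqt] at hfmem
      obtain ⟨M, hM⟩ := hfmem.bddAbove_range
      refine ⟨ENNReal.ofReal M, ENNReal.ofReal_ne_top, fun k : ℕ => ?_⟩
      exact ENNReal.ofReal_le_ofReal (hM ⟨k, rfl⟩)
    · have hp : (0:ℝ) < q.toReal := by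
        have h1 : (1:ℝ≥0∞).toReal ≤ q.toReal :=
          ENNReal.toReal_mono hqt hq
        simpa using lt_of_lt_of_le one_pos (by simpa using h1)
      unfold memSigma at hfmem
      rw [if_neg hqt] at hfmem
      refine ⟨sigmaNorm NE s q f, hfmem.ne, fun k : ℕ => ?_⟩
      unfold sigmaNorm
      rw [if_neg hqt]
      have h1 : ENNReal.ofReal ((2 : ℝ) ^ ((k : ℝ) * s) * NE (f k)) ^ q.toReal ≤
          ∑' k : ℕ, ENNReal.ofReal ((2 : ℝ) ^ ((k : ℝ) * s) * NE (f k)) ^ q.toReal :=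
        ENNReal.le_tsum k
      calc ENNReal.ofReal ((2 : ℝ) ^ ((k : ℝ) * s) * NE (f k))
          = (ENNReal.ofReal ((2 : ℝ) ^ ((k : ℝ) * s) * NE (f k)) ^ q.toReal)
            ^ (1 / q.toReal) := by
            rw [← ENNReal.rpow_mul, mul_one_div, div_self hp.ne', ENNReal.rpow_one]
        _ ≤ _ := ENNReal.rpow_le_rpow h1 (by positivity)
  -- the series ∑ a₀ is finite
  have hA : ∑' k, a₀ k ≠ ⊤ := by
    set c : ℝ≥0∞ := ENNReal.ofReal ((2:ℝ) ^ (s₀ - s)) with hc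
    have hclt : c < 1 := by
      rw [hc, ← ENNReal.ofReal_one]
      exact ENNReal.ofReal_lt_ofReal_iff_of_nonneg (by positivity) |>.mpr
        (Real.rpow_lt_one_of_one_lt_of_neg one_lt_two (by linarith))
    have hle : ∀ k, a₀ k ≤ c ^ k * M := by
      intro k
      have h2 : (2:ℝ) ^ ((k : ℝ) * s₀) = (2:ℝ) ^ ((k:ℝ) * (s₀ - s)) * (2:ℝ) ^ ((k:ℝ) * s) := by
        rw [← Real.rpow_add two_pos]; ring_nf
      have h3 : (2:ℝ) ^ ((k:ℝ) * (s₀ - s)) = ((2:ℝ) ^ (s₀ - s)) ^ k := by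
        rw [← Real.rpow_natCast ((2:ℝ) ^ (s₀ - s)) k, ← Real.rpow_mul (by norm_num), mul_comm]
      have : a₀ k = ENNReal.ofReal ((2:ℝ) ^ ((k:ℝ) * (s₀ - s)))
          * ENNReal.ofReal ((2 : ℝ) ^ ((k : ℝ) * s) * NE (f k)) := by
        rw [ha₀]
        simp only
        rw [h2, mul_assoc, ENNReal.ofReal_mul (by positivity)]
      rw [this, h3, ENNReal.ofReal_pow (by positivity)]
      exact mul_le_mul_right (hM k) _
    have hsum : ∑' k, c ^ k * M = (1 - c)⁻¹ * M := by
      rw [ENNReal.tsum_mul_right, ENNReal.tsum_geometric]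
    refine ne_top_of_le_ne_top ?_ (ENNReal.tsum_le_tsum hle)
    rw [hsum]
    exact ENNReal.mul_ne_top (ENNReal.inv_ne_top.mpr (tsub_pos_of_lt hclt).ne') hMtop
  -- the q = 1, s₀ norm of f - smoothS n f is a tail sum
  have hone : ∀ n, sigmaNorm NE s₀ 1 (f - smoothS n f) = ∑' i, a₀ (i + (n + 1)) := by
    intro n
    unfold sigmaNorm
    rw [if_neg (by norm_num)]
    simp only [ENNReal.toReal_one, ENNReal.rpow_one, one_div, inv_one]
    have hg : ∀ k : ℕ, ENNReal.ofReal ((2 : ℝ) ^ ((k : ℝ) * s₀) * NE ((f - smoothS n f) k))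
        = if k ≤ n then 0 else a₀ k := by
      intro k
      by_cases h : k ≤ n
      · simp [smoothS, h, hN0]
      · simp [smoothS, h, ha₀]
    rw [tsum_congr hg]
    have hinj : Function.Injective (fun i : ℕ => i + (n + 1)) :=
      fun a b hab => by simpa using hab
    rw [← hinj.tsum_eq (f := fun k => if k ≤ n then 0 else a₀ k) ?_]
    · refine tsum_congr fun i => ?_
      rw [if_neg (by omega)]
    · intro k hk
      simp only [Function.mem_support, ne_eq, ite_eq_left_iff, not_forall] at hk
      obtain ⟨h, -⟩ := hk
      exact ⟨k - (n + 1), show k - (n + 1) + (n + 1) = k by omega⟩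
  -- conclude by squeezing
  have htail : Tendsto (fun n : ℕ => ∑' i, a₀ (i + (n + 1))) atTop (nhds 0) :=
    (ENNReal.tendsto_sum_nat_add a₀ hA).comp (tendsto_add_atTop_nat 1)
  have hCtail : Tendsto (fun n : ℕ => ENNReal.ofReal C₀ * ∑' i, a₀ (i + (n + 1)))
      atTop (nhds 0) := by
    have := ENNReal.Tendsto.const_mul (a := ENNReal.ofReal C₀) htail (Or.inr ENNReal.ofReal_ne_top)
    simpa using this
  refine tendsto_of_tendsto_of_tendsto_of_le_of_le tendsto_const_nhds hCtail
    (fun n => zero_le) (fun n => ?_)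
  calc sigmaNorm NF s₀ ⊤ (Φ f - Φ (smoothS n f))
      ≤ ENNReal.ofReal C₀ * sigmaNorm NE s₀ 1 (f - smoothS n f) :=
        hlip f (smoothS n f) hfmem hfball (hmem n) (hball n)
    _ = ENNReal.ofReal C₀ * ∑' i, a₀ (i + (n + 1)) := by rw [hone n]
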